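/- Let $U, V$ be Hilbert spaces, $F: U \to V$ bounded linear, $u^\dagger \in U$, and $\mathcal{R}: U \to \mathbb{R}\cup\{\infty\}$ convex. Suppose there exists $\gamma_2 > 0$ such that $\mathcal{R}(u) - \mathcal{R}(u^\dagger) \ge -\gamma_2\|F(u - u^\dagger)\|$ for all $u \in U$. Then there exists $\omega \in \partial\mathcal{R}(u^\dagger)$ with $\omega \in \operatorname{range}(F^*)$ (closure not required when the subdifferential sum rule applies); i.e. the source condition $\partial\mathcal{R}(u^\dagger) \cap \operatorname{range}(F^*) \ne \emptyset$ holds. Conversely, if $\omega = F^*\eta \in \partial\mathcal{R}(u^\dagger)$, then $\mathcal{R}(u) - \mathcal{R}(u^\dagger) \ge \langle\omega, u-u^\dagger\rangle \ge -\|\eta\|\|F(u-u^\dagger)\|$ for all $u$. -/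

import Mathlib

open scoped InnerProductSpace Pointwise

theorem variational_iff_source
    {U V : Type*} [NormedAddCommGroup U] [InnerProductSpace ℝ U] [CompleteSpace U]
    [NormedAddCommGroup V] [InnerProductSpace ℝ V] [CompleteSpace V]
    (F : U →L[ℝ] V) (R : U → ℝ) (hR : ConvexOn ℝ Set.univ R) (udag : U) :
    ((∃ γ₂ > (0 : ℝ), ∀ u : U, R u - R udag ≥ -γ₂ * ‖F (u - udag)‖) →
      ∃ η : V, ∀ u : U,
        R udag + ⟪ContinuousLinearMap.adjoint F η, u - udag⟫_ℝ ≤ R u) ∧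
    (∀ η : V, (∀ u : U, R udag + ⟪ContinuousLinearMap.adjoint F η, u - udag⟫_ℝ ≤ R u) →
      ∀ u : U, R u - R udag ≥ -‖η‖ * ‖F (u - udag)‖) := by
  constructor
  · rintro ⟨γ, hγ, hvar⟩
    -- the sublinear "homogenized" functional
    set S : V → Set ℝ := fun w =>
      {r | ∃ t : ℝ, 0 < t ∧ ∃ v : U, r = t * (R (udag + v) - R udag) + γ * ‖w - t • F v‖}
      with hSdef
    have hne : ∀ w, (S w).Nonempty := by
      intro w
      exact ⟨1 * (R (udag + 0) - R udag) + γ * ‖w - (1:ℝ) • F 0‖, 1, one_pos, 0, rfl⟩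
    have hlb : ∀ w, ∀ r ∈ S w, -γ * ‖w‖ ≤ r := by
      rintro w r ⟨t, ht, v, rfl⟩
      have h1 : R (udag + v) - R udag ≥ -γ * ‖F (udag + v - udag)‖ := hvar _
      have h1' : R (udag + v) - R udag ≥ -γ * ‖F v‖ := by
        simpa using h1
      have h2 : ‖t • F v‖ - ‖w‖ ≤ ‖w - t • F v‖ := by
        have := norm_sub_norm_le (t • F v) w
        rwa [norm_sub_rev] at this
      have h3 : ‖t • F v‖ = t * ‖F v‖ := by
        rw [norm_smul, Real.norm_eq_abs, abs_of_pos ht]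
      nlinarith [norm_nonneg (F v), norm_nonneg w, norm_nonneg (w - t • F v)]
    have hbdd : ∀ w, BddBelow (S w) := fun w => ⟨-γ * ‖w‖, fun r hr => hlb w r hr⟩
    set q : V → ℝ := fun w => sInf (S w) with hqdef
    have hq_lb : ∀ w, -γ * ‖w‖ ≤ q w := fun w => le_csInf (hne w) (hlb w)
    have hq_ub : ∀ w, q w ≤ γ * ‖w‖ := by
      intro w
      have hm : 1 * (R (udag + 0) - R udag) + γ * ‖w - (1:ℝ) • F 0‖ ∈ S w :=
        ⟨1, one_pos, 0, rfl⟩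
      have := csInf_le (hbdd w) hm
      simpa using this
    -- positive homogeneity
    have hhom : ∀ c : ℝ, 0 < c → ∀ w, q (c • w) = c * q w := by
      intro c hc w
      have hset : S (c • w) = c • S w := by
        ext r
        constructor
        · rintro ⟨t, ht, v, rfl⟩
          refine ⟨(t/c) * (R (udag + v) - R udag) + γ * ‖w - (t/c) • F v‖,
            ⟨t/c, div_pos ht hc, v, rfl⟩, ?_⟩
          have : c • (w - (t/c) • F v) = c • w - t • F v := by
            rw [smul_sub, smul_smul]
            congr 2
            field_simp
          simp only [smul_eq_mul]
          rw [mul_add, ← mul_assoc, ← this, norm_smul, Real.norm_eq_abs,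
            abs_of_pos hc]
          field_simp
        · rintro ⟨r', ⟨t, ht, v, rfl⟩, rfl⟩
          refine ⟨c * t, mul_pos hc ht, v, ?_⟩
          have : c • w - (c * t) • F v = c • (w - t • F v) := by
            rw [smul_sub, smul_smul]
          simp only [smul_eq_mul]
          rw [this, norm_smul, Real.norm_eq_abs, abs_of_pos hc]
          ring
      rw [hqdef]
      simp only
      rw [hset, Real.sInf_smul_of_nonneg hc.le, smul_eq_mul]
    -- subadditivity
    have hadd : ∀ w₁ w₂, q (w₁ + w₂) ≤ q w₁ + q w₂ := by
      intro w₁ w₂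
      have key : ∀ r₁ ∈ S w₁, ∀ r₂ ∈ S w₂, q (w₁ + w₂) ≤ r₁ + r₂ := by
        rintro r₁ ⟨t₁, ht₁, v₁, rfl⟩ r₂ ⟨t₂, ht₂, v₂, rfl⟩
        set t := t₁ + t₂ with htdef
        have ht : 0 < t := by positivity
        set v : U := (t₁/t) • v₁ + (t₂/t) • v₂ with hvdef
        have hmem : t * (R (udag + v) - R udag) + γ * ‖(w₁ + w₂) - t • F v‖ ∈ S (w₁+w₂) :=
          ⟨t, ht, v, rfl⟩
        have hle := csInf_le (hbdd (w₁+w₂)) hmem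
        -- convexity bound
        have hsum : t₁/t + t₂/t = 1 := by field_simp; exact htdef.symm
        have hpt : udag + v = (t₁/t) • (udag + v₁) + (t₂/t) • (udag + v₂) := by
          rw [hvdef, smul_add, smul_add]
          have : (t₁/t) • udag + (t₂/t) • udag = udag := by
            rw [← add_smul, hsum, one_smul]
          abel_nf
          rw [← add_smul, hsum, one_smul]
          abel
        have hconv : R (udag + v) ≤ (t₁/t) * R (udag + v₁) + (t₂/t) * R (udag + v₂) := by
          have := hR.2 (Set.mem_univ (udag + v₁)) (Set.mem_univ (udag + v₂))
            (by positivity : (0:ℝ) ≤ t₁/t) (by positivity : (0:ℝ) ≤ t₂/t) hsum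
          rw [← hpt] at this
          simpa using this
        have hF : t • F v = t₁ • F v₁ + t₂ • F v₂ := by
          rw [hvdef, map_add, map_smul, map_smul, smul_add, smul_smul, smul_smul]
          have ht' : t ≠ 0 := ne_of_gt ht
          rw [mul_div_cancel₀ _ ht', mul_div_cancel₀ _ ht']
        have htri : ‖(w₁ + w₂) - t • F v‖ ≤ ‖w₁ - t₁ • F v₁‖ + ‖w₂ - t₂ • F v₂‖ := by
          rw [hF]
          calc ‖(w₁ + w₂) - (t₁ • F v₁ + t₂ • F v₂)‖
              = ‖(w₁ - t₁ • F v₁) + (w₂ - t₂ • F v₂)‖ := by congr 1; abel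
            _ ≤ _ := norm_add_le _ _
        have harith : t * (R (udag + v) - R udag)
            ≤ t₁ * (R (udag + v₁) - R udag) + t₂ * (R (udag + v₂) - R udag) := by
          have h := mul_le_mul_of_nonneg_left hconv ht.le
          have e1 : t * ((t₁/t) * R (udag + v₁) + (t₂/t) * R (udag + v₂))
              = t₁ * R (udag + v₁) + t₂ * R (udag + v₂) := by
            field_simp
          have e2 : t * R udag = t₁ * R udag + t₂ * R udag := by
            rw [htdef]; ring
          have e3 : t * (R (udag + v) - R udag) = t * R (udag + v) - t * R udag := by ring
          have e4 : t₁ * (R (udag + v₁) - R udag) = t₁ * R (udag + v₁) - t₁ * R udag := by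
            ring
          have e5 : t₂ * (R (udag + v₂) - R udag) = t₂ * R (udag + v₂) - t₂ * R udag := by
            ring
          clear_value t v
          linarith [h, e1, e2, e3, e4, e5]
        nlinarith [hle, htri, harith, hγ]
      have h2 : q (w₁ + w₂) - q w₁ ≤ q w₂ := by
        apply le_csInf (hne w₂)
        intro r₂ hr₂
        have h3 : q (w₁ + w₂) - r₂ ≤ q w₁ := by
          apply le_csInf (hne w₁)
          intro r₁ hr₁
          linarith [key r₁ hr₁ r₂ hr₂]
        linarith
      linarith
    -- Hahn–Banach extension of 0 on ⊥
    have hq0 : 0 ≤ q 0 := by simpa using hq_lb 0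
    obtain ⟨g, -, hg⟩ := exists_extension_of_le_sublinear
      ((0 : V →ₗ[ℝ] ℝ).toPMap ⊥) q hhom hadd
      (by rintro ⟨x, hx⟩
          simp only [LinearMap.toPMap_apply, LinearMap.zero_apply]
          have : x = 0 := by simpa using hx
          subst this; exact hq0)
    -- continuity
    have hgb : ∀ w, ‖g w‖ ≤ γ * ‖w‖ := by
      intro w
      rw [Real.norm_eq_abs, abs_le]
      constructor
      · have := (hg (-w)).trans (hq_ub (-w))
        simp only [map_neg, norm_neg] at this
        linarith
      · exact (hg w).trans (hq_ub w)
    set L : V →L[ℝ] ℝ := LinearMap.mkContinuous g γ hgb with hLdef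
    refine ⟨(InnerProductSpace.toDual ℝ V).symm L, fun u => ?_⟩
    have hadj : ⟪ContinuousLinearMap.adjoint F ((InnerProductSpace.toDual ℝ V).symm L),
        u - udag⟫_ℝ = ⟪(InnerProductSpace.toDual ℝ V).symm L, F (u - udag)⟫_ℝ :=
      ContinuousLinearMap.adjoint_inner_left F _ _
    have hLval : ⟪(InnerProductSpace.toDual ℝ V).symm L, F (u - udag)⟫_ℝ
        = g (F (u - udag)) := by
      rw [InnerProductSpace.toDual_symm_apply]
      rfl
    have hmem : 1 * (R (udag + (u - udag)) - R udag)
        + γ * ‖F (u - udag) - (1:ℝ) • F (u - udag)‖ ∈ S (F (u - udag)) :=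
      ⟨1, one_pos, u - udag, rfl⟩
    have hqle : q (F (u - udag)) ≤ R u - R udag := by
      have := csInf_le (hbdd _) hmem
      simpa using this
    have := (hg (F (u - udag))).trans hqle
    rw [hadj, hLval]
    linarith
  · intro η hη u
    have h := hη u
    have hadj : ⟪ContinuousLinearMap.adjoint F η, u - udag⟫_ℝ = ⟪η, F (u - udag)⟫_ℝ :=
      ContinuousLinearMap.adjoint_inner_left F (u - udag) η
    have hcs : |⟪η, F (u - udag)⟫_ℝ| ≤ ‖η‖ * ‖F (u - udag)‖ :=
      abs_real_inner_le_norm η (F (u - udag))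
    rw [hadj] at h
    have := abs_le.1 hcs
    linarith [this.1]
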